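/- Let F be the fraction field of D inside Ω and n ≥ 1. Let S₁ and S₂ be finite subsets of F(x)[X,1/det(X)] (respectively, of F[X,1/det(X)]). If S₁ is contained in the ideal generated by S₂ in Ω(x)[X,1/det(X)] (respectively, in Ω[X,1/det(X)]), then there is a nonzero c ∈ D such that for every φ ∈ Hom_k(D,k̄) with φ(c) ≠ 0: every element p of S₁ ∪ S₂ specializes to a well-defined element φ(p) of k̄(x)[X,1/det(X)] (respectively, of k̄[X,1/det(X)]) — obtained by writing the coefficients of p as quotients of elements of D[x] (respectively, of D) whose denominators have nonzero image under φ and applying φ — and φ(S₁) is contained in the ideal generated by φ(S₂) in k̄(x)[X,1/det(X)] (respectively, in k̄[X,1/det(X)]). -/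

import Mathlib

set_option linter.unusedSectionVars false
set_option linter.unusedVariables false


noncomputable section MatrixLocalization

/-- The determinant of the generic `n × n` matrix `X = (X_{ij})`. -/
def detPoly (n : ℕ) (E : Type*) [CommRing E] : MvPolynomial (Fin n × Fin n) E :=
  (Matrix.of fun i j : Fin n => MvPolynomial.X (i, j)).det

/-- The ring `E[X, 1/det(X)]`. -/
abbrev MatrixLoc (n : ℕ) (E : Type*) [CommRing E] := Localization.Away (detPoly n E)

theorem map_detPoly {E E' : Type*} [CommRing E] [CommRing E'] (n : ℕ) (u : E →+* E') :
    MvPolynomial.map u (detPoly n E) = detPoly n E' := by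
  simp only [detPoly, RingHom.map_det]
  congr 1
  ext i j
  simp [Matrix.map_apply]

/-- The canonical map `A[X] → E[X,1/det(X)]` induced by `g : A →+* E` on coefficients. -/
def toML {A E : Type*} [CommRing A] [CommRing E] (n : ℕ) (g : A →+* E) :
    MvPolynomial (Fin n × Fin n) A →+* MatrixLoc n E :=
  (algebraMap (MvPolynomial (Fin n × Fin n) E) (MatrixLoc n E)).comp (MvPolynomial.map g)

/-- The ring homomorphism `E[X,1/det(X)] → E'[X,1/det(X)]` induced by `u : E →+* E'`. -/
def MatrixLocMap {E E' : Type*} [CommRing E] [CommRing E'] (n : ℕ) (u : E →+* E') :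
    MatrixLoc n E →+* MatrixLoc n E' :=
  Localization.awayLift (toML n u) (detPoly n E) (by
    have h : toML n u (detPoly n E)
        = algebraMap (MvPolynomial (Fin n × Fin n) E') (MatrixLoc n E') (detPoly n E') := by
      simp [toML, map_detPoly n u]
    rw [h]
    exact IsLocalization.Away.algebraMap_isUnit _)

/-- `p ∈ Frac(A)[X,1/det(X)]` specializes, along `σ : A →+* B`, to the well-defined element
`y ∈ B[X,1/det(X)]`: `p` can be written with numerator a polynomial over `A` and denominator
`b·det(X)^N` with `b ∈ A` whose image under `σ` is nonzero, and `y` is the corresponding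
quotient of the images. -/
def SpecTo {A B : Type*} [CommRing A] [IsDomain A] [CommRing B] (n : ℕ) (σ : A →+* B)
    (p : MatrixLoc n (FractionRing A)) (y : MatrixLoc n B) : Prop :=
  ∃ (P : MvPolynomial (Fin n × Fin n) A) (b : A) (N : ℕ),
    b ≠ 0 ∧ σ b ≠ 0 ∧
    p * toML n (algebraMap A (FractionRing A)) (MvPolynomial.C b * detPoly n A ^ N)
      = toML n (algebraMap A (FractionRing A)) P ∧
    y * toML n σ (MvPolynomial.C b * detPoly n A ^ N) = toML n σ P

end MatrixLocalization

noncomputable section Embeddings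

variable {Ω k : Type*} [Field Ω] [Field k] [Algebra k Ω] (D : Subalgebra k Ω)

theorem algebraMap_subalgebra_injective : Function.Injective (algebraMap ↥D Ω) :=
  Subtype.val_injective

/-- The embedding `F = Frac(D) → Ω`. -/
def embF : FractionRing ↥D →+* Ω :=
  IsFractionRing.lift (g := algebraMap ↥D Ω) (algebraMap_subalgebra_injective D)

/-- The embedding `F(x) = Frac(D[x]) → Ω(x) = Frac(Ω[x])`. -/
def embFx : FractionRing (Polynomial ↥D) →+* FractionRing (Polynomial Ω) :=
  IsFractionRing.lift
    (g := (algebraMap (Polynomial Ω) (FractionRing (Polynomial Ω))).comp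
      (Polynomial.mapRingHom (algebraMap ↥D Ω)))
    ((IsFractionRing.injective (Polynomial Ω) (FractionRing (Polynomial Ω))).comp
      (Polynomial.map_injective _ (algebraMap_subalgebra_injective D)))

/-- The induced embedding `F[X,1/det(X)] → Ω[X,1/det(X)]`. -/
def embML (n : ℕ) : MatrixLoc n (FractionRing ↥D) →+* MatrixLoc n Ω :=
  MatrixLocMap n (embF D)

/-- The induced embedding `F(x)[X,1/det(X)] → Ω(x)[X,1/det(X)]`. -/
def embMLx (n : ℕ) :
    MatrixLoc n (FractionRing (Polynomial ↥D)) →+* MatrixLoc n (FractionRing (Polynomial Ω)) :=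
  MatrixLocMap n (embFx D)

end Embeddings

noncomputable section Aux

open MvPolynomial

variable {n : ℕ}

theorem detPoly_ne_zero (E : Type*) [CommRing E] [Nontrivial E] : detPoly n E ≠ 0 := by
  intro h
  have key : (MvPolynomial.eval (fun p : Fin n × Fin n => if p.1 = p.2 then (1:E) else 0))
      (detPoly n E) = 1 := by
    rw [detPoly, show (MvPolynomial.eval fun p : Fin n × Fin n => if p.1 = p.2 then (1:E) else 0)
        (Matrix.of fun i j : Fin n => MvPolynomial.X (i, j)).det
        = ((Matrix.of fun i j : Fin n => MvPolynomial.X (i, j)).map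
            (MvPolynomial.eval fun p : Fin n × Fin n => if p.1 = p.2 then (1:E) else 0)).det
      from RingHom.map_det _ _]
    have h1 : ((Matrix.of fun i j : Fin n => MvPolynomial.X (i, j)).map
        (MvPolynomial.eval fun p : Fin n × Fin n => if p.1 = p.2 then (1:E) else 0)) = 1 := by
      ext i j
      simp [Matrix.map_apply, Matrix.one_apply]
    rw [h1, Matrix.det_one]
  rw [h, map_zero] at key
  exact zero_ne_one key

theorem powers_detPoly_le (E : Type*) [CommRing E] [IsDomain E] :
    Submonoid.powers (detPoly n E) ≤ nonZeroDivisors (MvPolynomial (Fin n × Fin n) E) :=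
  powers_le_nonZeroDivisors_of_noZeroDivisors (detPoly_ne_zero E)

theorem algL_injective (E : Type*) [CommRing E] [IsDomain E] :
    Function.Injective (algebraMap (MvPolynomial (Fin n × Fin n) E) (MatrixLoc n E)) :=
  IsLocalization.injective _ (powers_detPoly_le E)

theorem toML_apply {A E : Type*} [CommRing A] [CommRing E] (g : A →+* E)
    (q : MvPolynomial (Fin n × Fin n) A) :
    toML n g q = algebraMap (MvPolynomial (Fin n × Fin n) E) (MatrixLoc n E)
      (MvPolynomial.map g q) := rfl

theorem toML_injective {A E : Type*} [CommRing A] [CommRing E] [IsDomain E] (g : A →+* E)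
    (hg : Function.Injective g) : Function.Injective (toML n g) :=
  (algL_injective E).comp (MvPolynomial.map_injective g hg)

theorem MatrixLocMap_algebraMap {E E' : Type*} [CommRing E] [CommRing E'] (u : E →+* E')
    (q : MvPolynomial (Fin n × Fin n) E) :
    MatrixLocMap n u (algebraMap (MvPolynomial (Fin n × Fin n) E) (MatrixLoc n E) q)
      = toML n u q :=
by
  apply IsLocalization.Away.lift_eq
  rw [show toML n u (detPoly n E)
      = algebraMap (MvPolynomial (Fin n × Fin n) E') (MatrixLoc n E') (detPoly n E') by
    simp [toML, map_detPoly n u]]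
  exact IsLocalization.Away.algebraMap_isUnit _

theorem exists_rep {E : Type*} [CommRing E] (x : MatrixLoc n E) :
    ∃ (Q : MvPolynomial (Fin n × Fin n) E) (N : ℕ),
      x * algebraMap (MvPolynomial (Fin n × Fin n) E) (MatrixLoc n E) (detPoly n E ^ N)
        = algebraMap (MvPolynomial (Fin n × Fin n) E) (MatrixLoc n E) Q := by
  obtain ⟨⟨Q, m⟩, hm⟩ := IsLocalization.surj (Submonoid.powers (detPoly n E)) x
  obtain ⟨N, hN⟩ := m.2
  exact ⟨Q, N, by
    rw [show detPoly n E ^ N = (m : MvPolynomial (Fin n × Fin n) E) from hN]; exact hm⟩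

theorem isUnit_det_pow {E : Type*} [CommRing E] (N : ℕ) :
    IsUnit (algebraMap (MvPolynomial (Fin n × Fin n) E) (MatrixLoc n E) (detPoly n E ^ N)) := by
  rw [map_pow]
  exact (IsLocalization.Away.algebraMap_isUnit _).pow N

end Aux
noncomputable section Descend

open MvPolynomial

variable {n : ℕ}

section PiMapDefs

variable {F E : Type*} [CommRing F] [CommRing E]

/-- Coefficientwise application of a retraction `π : E → F`. -/
def PiMap {σ : Type*} (π : E → F) (q : MvPolynomial σ E) : MvPolynomial σ F :=
  ∑ m ∈ q.support, monomial m (π (q.coeff m))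

theorem coeff_PiMap {σ : Type*} (π : E → F) (hπ0 : π 0 = 0) (q : MvPolynomial σ E)
    (m : σ →₀ ℕ) : coeff m (PiMap π q) = π (coeff m q) := by
  classical
  rw [PiMap]
  rw [show coeff m (∑ m' ∈ q.support, monomial m' (π (q.coeff m')))
      = ∑ m' ∈ q.support, coeff m (monomial m' (π (q.coeff m'))) from
    map_sum (coeffAddMonoidHom m) _ _]
  simp_rw [coeff_monomial]
  rw [Finset.sum_ite_eq' q.support m (fun m' => π (q.coeff m'))]
  split_ifs with hmem
  · rfl
  · rw [notMem_support_iff.mp hmem, hπ0]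

theorem PiMap_add {σ : Type*} (π : E → F) (hπ0 : π 0 = 0)
    (hadd : ∀ x y, π (x + y) = π x + π y) (q q' : MvPolynomial σ E) :
    PiMap π (q + q') = PiMap π q + PiMap π q' := by
  ext m
  simp only [coeff_PiMap π hπ0, coeff_add, hadd]

theorem PiMap_mul {σ : Type*} (ι : F →+* E) (π : E → F) (hπ0 : π 0 = 0)
    (hadd : ∀ x y, π (x + y) = π x + π y)
    (hsmul : ∀ (a : F) (e : E), π (ι a * e) = a * π e)
    (g : MvPolynomial σ F) (q : MvPolynomial σ E) :
    PiMap π (MvPolynomial.map ι g * q) = g * PiMap π q := by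
  classical
  induction g using MvPolynomial.induction_on' with
  | monomial s a =>
    ext m
    rw [coeff_PiMap π hπ0, map_monomial, coeff_monomial_mul', coeff_monomial_mul']
    split_ifs with hle
    · rw [hsmul, coeff_PiMap π hπ0]
    · exact hπ0
  | add g₁ g₂ h₁ h₂ =>
    rw [map_add, add_mul, PiMap_add π hπ0 hadd, h₁, h₂, add_mul]

theorem PiMap_one {σ : Type*} (π : E → F) (hπ0 : π 0 = 0) (hone : π 1 = 1) :
    PiMap π (1 : MvPolynomial σ E) = 1 := by
  classical
  ext m
  rw [coeff_PiMap π hπ0]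
  rcases eq_or_ne (0 : σ →₀ ℕ) m with h | h
  · rw [← h]; simp [hone]
  · rw [coeff_one, coeff_one, if_neg h, if_neg h, hπ0]

theorem PiMap_map {σ : Type*} (ι : F →+* E) (π : E → F) (hπ0 : π 0 = 0)
    (hadd : ∀ x y, π (x + y) = π x + π y)
    (hsmul : ∀ (a : F) (e : E), π (ι a * e) = a * π e)
    (hone : π 1 = 1) (g : MvPolynomial σ F) :
    PiMap π (MvPolynomial.map ι g) = g := by
  have := PiMap_mul ι π hπ0 hadd hsmul g (1 : MvPolynomial σ E)
  rw [mul_one, PiMap_one π hπ0 hone, mul_one] at this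
  exact this

end PiMapDefs

/-- Over fields, a retraction of `ι` with the projection properties always exists. -/
theorem exists_retraction {F E : Type*} [Field F] [Field E] (ι : F →+* E) :
    ∃ π : E → F, π 0 = 0 ∧ (∀ x y, π (x + y) = π x + π y) ∧
      (∀ (a : F) (e : E), π (ι a * e) = a * π e) ∧ π 1 = 1 := by
  letI : Algebra F E := ι.toAlgebra
  have halg : algebraMap F E = ι := RingHom.algebraMap_toAlgebra ι
  obtain ⟨π, hπ⟩ := (Algebra.linearMap F E).exists_leftInverse_of_injective
    (LinearMap.ker_eq_bot.mpr (by
      intro x y hxy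
      exact ι.injective (by rwa [Algebra.linearMap_apply, Algebra.linearMap_apply, halg] at hxy)))
  have hπι : ∀ a : F, π (ι a) = a := by
    intro a
    have := LinearMap.congr_fun hπ a
    rwa [LinearMap.comp_apply, Algebra.linearMap_apply, halg, LinearMap.id_apply] at this
  refine ⟨π, map_zero π, map_add π, ?_, by simpa using hπι 1⟩
  intro a e
  have : ι a * e = a • e := by rw [Algebra.smul_def, halg]
  rw [this, map_smul, smul_eq_mul]

theorem rep_upgrade {E : Type*} [CommRing E] {x : MatrixLoc n E}
    {Q : MvPolynomial (Fin n × Fin n) E} {N : ℕ}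
    (h : x * algebraMap (MvPolynomial (Fin n × Fin n) E) (MatrixLoc n E) (detPoly n E ^ N)
      = algebraMap (MvPolynomial (Fin n × Fin n) E) (MatrixLoc n E) Q)
    {M : ℕ} (hM : N ≤ M) :
    x * algebraMap (MvPolynomial (Fin n × Fin n) E) (MatrixLoc n E) (detPoly n E ^ M)
      = algebraMap (MvPolynomial (Fin n × Fin n) E) (MatrixLoc n E)
        (Q * detPoly n E ^ (M - N)) := by
  have hpow : detPoly n E ^ M = detPoly n E ^ N * detPoly n E ^ (M - N) := by
    rw [← pow_add, Nat.add_sub_cancel' hM]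
  rw [hpow, map_mul, ← mul_assoc, h, ← map_mul]

theorem descend' {F E : Type*} [CommRing F] [IsDomain F] [CommRing E] [IsDomain E]
    (ι : F →+* E) (π : E → F) (hπ0 : π 0 = 0)
    (hadd : ∀ x y, π (x + y) = π x + π y)
    (hsmul : ∀ (a : F) (e : E), π (ι a * e) = a * π e) (hone : π 1 = 1)
    (S : Set (MatrixLoc n F)) (p : MatrixLoc n F)
    (h : MatrixLocMap n ι p ∈ Ideal.span (⇑(MatrixLocMap n ι) '' S)) :
    p ∈ Ideal.span S := by
  classical
  set f := MatrixLocMap n ι with hf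
  set algF := algebraMap (MvPolynomial (Fin n × Fin n) F) (MatrixLoc n F) with halgF
  set algE := algebraMap (MvPolynomial (Fin n × Fin n) E) (MatrixLoc n E) with halgE
  rw [Ideal.span, Submodule.mem_span_set'] at h
  obtain ⟨r, a, g, hsum⟩ := h
  choose s hsS hfs using fun i => (g i).2
  -- choice of representations
  choose QF NF hQF using fun x : MatrixLoc n F => exists_rep x
  choose QE NE hQE using fun x : MatrixLoc n E => exists_rep x
  set M := max (NF p) ((Finset.univ : Finset (Fin r)).sup
    fun i => max (NF (s i)) (NE (a i))) with hM
  have hMp : NF p ≤ M := le_max_left _ _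
  have hsup : ∀ i, max (NF (s i)) (NE (a i)) ≤ M := by
    intro i
    rw [hM]
    exact le_trans (Finset.le_sup (f := fun i => max (NF (s i)) (NE (a i)))
      (Finset.mem_univ i)) (le_max_right _ _)
  have hMs : ∀ i, NF (s i) ≤ M := fun i => le_trans (le_max_left _ _) (hsup i)
  have hMa : ∀ i, NE (a i) ≤ M := fun i => le_trans (le_max_right _ _) (hsup i)
  set P' := QF p * detPoly n F ^ (M - NF p) with hP'
  set S' := fun i => QF (s i) * detPoly n F ^ (M - NF (s i)) with hS'
  set A := fun i => QE (a i) * detPoly n E ^ (M - NE (a i)) with hA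
  have hpM : p * algF (detPoly n F ^ M) = algF P' := rep_upgrade (hQF p) hMp
  have hsM : ∀ i, s i * algF (detPoly n F ^ M) = algF (S' i) :=
    fun i => rep_upgrade (hQF (s i)) (hMs i)
  have haM : ∀ i, a i * algE (detPoly n E ^ M) = algE (A i) :=
    fun i => rep_upgrade (hQE (a i)) (hMa i)
  -- f maps algF to algE ∘ map ι
  have hfalg : ∀ q, f (algF q) = algE (MvPolynomial.map ι q) := fun q =>
    MatrixLocMap_algebraMap ι q
  have hfd : f (algF (detPoly n F ^ M)) = algE (detPoly n E ^ M) := by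
    rw [hfalg, map_pow, map_detPoly]
  -- the polynomial identity over E
  have key : MvPolynomial.map ι (P' * detPoly n F ^ M)
      = ∑ i, A i * MvPolynomial.map ι (S' i) := by
    apply algL_injective E
    show algE (MvPolynomial.map ι (P' * detPoly n F ^ M))
        = algE (∑ i, A i * MvPolynomial.map ι (S' i))
    rw [map_sum]
    calc algE (MvPolynomial.map ι (P' * detPoly n F ^ M))
        = f p * algE (detPoly n E ^ M) * algE (detPoly n E ^ M) := by
          rw [map_mul (MvPolynomial.map ι), map_pow (MvPolynomial.map ι), map_detPoly, map_mul algE, ← hfd,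
            ← hfalg, ← hpM, map_mul f, hfd]
      _ = (∑ i, a i • (g i : MatrixLoc n E)) * algE (detPoly n E ^ M)
            * algE (detPoly n E ^ M) := by rw [hsum]
      _ = ∑ i, algE (A i * MvPolynomial.map ι (S' i)) := by
          rw [Finset.sum_mul, Finset.sum_mul]
          apply Finset.sum_congr rfl
          intro i _
          rw [smul_eq_mul, ← hfs i, map_mul]
          calc a i * f (s i) * algE (detPoly n E ^ M) * algE (detPoly n E ^ M)
              = (a i * algE (detPoly n E ^ M)) * (f (s i) * f (algF (detPoly n F ^ M))) := by
                rw [hfd]; ring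
            _ = algE (A i) * f (s i * algF (detPoly n F ^ M)) := by
                rw [haM i, map_mul f (s i) (algF (detPoly n F ^ M))]
            _ = algE (A i) * algE (MvPolynomial.map ι (S' i)) := by rw [hsM i, hfalg]
  -- apply PiMap
  have keyF : P' * detPoly n F ^ M = ∑ i, S' i * PiMap π (A i) := by
    have h1 := congrArg (PiMap π) key
    rw [PiMap_map ι π hπ0 hadd hsmul hone] at h1
    rw [h1]
    rw [show PiMap π (∑ i, A i * MvPolynomial.map ι (S' i))
        = ∑ i, PiMap π (A i * MvPolynomial.map ι (S' i)) by
      induction (Finset.univ : Finset (Fin r)) using Finset.induction_on with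
      | empty => simp [PiMap]
      | insert _ _ hx ih =>
          rw [Finset.sum_insert hx, Finset.sum_insert hx, PiMap_add π hπ0 hadd, ih]]
    apply Finset.sum_congr rfl
    intro i _
    rw [mul_comm (A i), PiMap_mul ι π hπ0 hadd hsmul]
  -- back to MatrixLoc n F
  obtain ⟨u, hu⟩ := isUnit_det_pow (E := F) (n := n) M
  have hfinal : p * algF (detPoly n F ^ M) = ∑ i, s i * algF (PiMap π (A i)) := by
    have h2 := congrArg algF keyF
    rw [map_mul, map_sum] at h2
    rw [← hpM] at h2
    have h3 : (p * algF (detPoly n F ^ M)) * algF (detPoly n F ^ M)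
        = (∑ i, s i * algF (PiMap π (A i))) * algF (detPoly n F ^ M) := by
      rw [h2, Finset.sum_mul]
      apply Finset.sum_congr rfl
      intro i _
      rw [map_mul, ← hsM i]
      ring
    exact (isUnit_det_pow M).mul_right_cancel h3
  have hp : p = ∑ i, s i * (↑u⁻¹ * algF (PiMap π (A i))) := by
    calc p = p * ↑u * ↑u⁻¹ := by rw [mul_assoc, Units.mul_inv, mul_one]
      _ = (∑ i, s i * algF (PiMap π (A i))) * ↑u⁻¹ := by rw [hu, hfinal]
      _ = ∑ i, s i * (↑u⁻¹ * algF (PiMap π (A i))) := by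
          rw [Finset.sum_mul]; apply Finset.sum_congr rfl; intro i _; ring
  rw [hp]
  exact Ideal.sum_mem _ fun i _ => by
    rw [mul_comm]
    exact Ideal.mul_mem_left _ _ (Ideal.subset_span (hsS i))

end Descend
noncomputable section MainSpec

open MvPolynomial

variable {n : ℕ}

theorem exists_repA {A : Type*} [CommRing A] [IsDomain A] (t : MatrixLoc n (FractionRing A)) :
    ∃ (Z : MvPolynomial (Fin n × Fin n) A) (b : A) (N : ℕ), b ≠ 0 ∧
      t * toML n (algebraMap A (FractionRing A)) (MvPolynomial.C b * detPoly n A ^ N)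
        = toML n (algebraMap A (FractionRing A)) Z := by
  classical
  obtain ⟨Q, N, hQ⟩ := exists_rep t
  obtain ⟨b, hb⟩ := IsLocalization.exist_integer_multiples (nonZeroDivisors A)
    Q.support (fun m => Q.coeff m)
  set ψ := algebraMap A (FractionRing A) with hψ
  set d : FractionRing A → A :=
    fun x => if h : ∃ a : A, ψ a = (b : A) • x then h.choose else 0 with hd
  have hchoice : ∀ (x : FractionRing A) (hx : ∃ a : A, ψ a = (b : A) • x), d x = hx.choose :=
    fun x hx => dif_pos hx
  have hd0 : d 0 = 0 := by
    have hex : ∃ a : A, ψ a = (b : A) • (0 : FractionRing A) := ⟨0, by simp⟩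
    rw [hchoice 0 hex]
    have hc := hex.choose_spec
    exact IsFractionRing.injective A (FractionRing A) (by rw [hc, smul_zero, map_zero])
  have hdspec : ∀ m ∈ Q.support, ψ (d (Q.coeff m)) = (b : A) • Q.coeff m := by
    intro m hm
    obtain ⟨z, hz⟩ := hb m hm
    have hex : ∃ a : A, ψ a = (b : A) • Q.coeff m := ⟨z, hz⟩
    rw [hchoice _ hex]
    exact hex.choose_spec
  refine ⟨PiMap d Q, b, N, nonZeroDivisors.coe_ne_zero b, ?_⟩
  have hmapZ : MvPolynomial.map ψ (PiMap d Q) = MvPolynomial.C (ψ b) * Q := by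
    ext m
    rw [coeff_map, coeff_PiMap d hd0, C_mul', coeff_smul, smul_eq_mul]
    by_cases hm : m ∈ Q.support
    · rw [hdspec m hm, Algebra.smul_def, hψ]
    · rw [notMem_support_iff.mp hm, hd0, map_zero, mul_zero]
  have h1 : toML n ψ (MvPolynomial.C (b : A) * detPoly n A ^ N)
      = (algebraMap (MvPolynomial (Fin n × Fin n) (FractionRing A))
          (MatrixLoc n (FractionRing A))) (MvPolynomial.C (ψ b))
        * (algebraMap (MvPolynomial (Fin n × Fin n) (FractionRing A))
          (MatrixLoc n (FractionRing A))) (detPoly n (FractionRing A) ^ N) := by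
    rw [toML_apply, map_mul (MvPolynomial.map ψ), map_pow (MvPolynomial.map ψ), map_detPoly,
      map_C, map_mul]
  have h2 : toML n ψ (PiMap d Q)
      = (algebraMap (MvPolynomial (Fin n × Fin n) (FractionRing A))
          (MatrixLoc n (FractionRing A))) (MvPolynomial.C (ψ b))
        * (algebraMap (MvPolynomial (Fin n × Fin n) (FractionRing A))
          (MatrixLoc n (FractionRing A))) Q := by
    rw [toML_apply, hmapZ, map_mul]
  rw [h1, h2, ← hQ]
  ring

theorem rep_upgradeA {A : Type*} [CommRing A] [IsDomain A] {t : MatrixLoc n (FractionRing A)}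
    {Z : MvPolynomial (Fin n × Fin n) A} {b : A} {N : ℕ}
    (h : t * toML n (algebraMap A (FractionRing A)) (MvPolynomial.C b * detPoly n A ^ N)
      = toML n (algebraMap A (FractionRing A)) Z)
    (k : A) {N' : ℕ} (hN : N ≤ N') :
    t * toML n (algebraMap A (FractionRing A)) (MvPolynomial.C (b * k) * detPoly n A ^ N')
      = toML n (algebraMap A (FractionRing A))
        (Z * (MvPolynomial.C k * detPoly n A ^ (N' - N))) := by
  have hpow : detPoly n A ^ N' = detPoly n A ^ N * detPoly n A ^ (N' - N) := by
    rw [← pow_add, Nat.add_sub_cancel' hN]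
  have hfac : MvPolynomial.C (b * k) * detPoly n A ^ N'
      = (MvPolynomial.C b * detPoly n A ^ N) * (MvPolynomial.C k * detPoly n A ^ (N' - N)) := by
    rw [C_mul, hpow]; ring
  rw [hfac, map_mul, ← mul_assoc, h, ← map_mul]

theorem exists_uniform_rep {A : Type*} [CommRing A] [IsDomain A]
    (T : Finset (MatrixLoc n (FractionRing A))) :
    ∃ (b : A) (N : ℕ), b ≠ 0 ∧ ∀ t ∈ T, ∃ Z : MvPolynomial (Fin n × Fin n) A,
      t * toML n (algebraMap A (FractionRing A)) (MvPolynomial.C b * detPoly n A ^ N)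
        = toML n (algebraMap A (FractionRing A)) Z := by
  classical
  induction T using Finset.induction_on with
  | empty => exact ⟨1, 0, one_ne_zero, fun t ht => absurd ht (Finset.notMem_empty t)⟩
  | @insert t T ht ih =>
    obtain ⟨Z₀, b₀, N₀, hb₀, hrep₀⟩ := exists_repA t
    obtain ⟨b₁, N₁, hb₁, hrep₁⟩ := ih
    refine ⟨b₀ * b₁, max N₀ N₁, mul_ne_zero hb₀ hb₁, ?_⟩
    intro s hs
    rcases Finset.mem_insert.mp hs with rfl | hsT
    · exact ⟨_, rep_upgradeA hrep₀ b₁ (le_max_left _ _)⟩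
    · obtain ⟨Z, hZ⟩ := hrep₁ s hsT
      refine ⟨Z * (MvPolynomial.C b₀ * detPoly n A ^ (max N₀ N₁ - N₁)), ?_⟩
      rw [show b₀ * b₁ = b₁ * b₀ from mul_comm _ _]
      exact rep_upgradeA hZ b₀ (le_max_right _ _)

theorem isUnit_toML_denom {A B : Type*} [CommRing A] [CommRing B] (σ : A →+* B) {b : A} (N : ℕ)
    (hb : IsUnit (σ b)) : IsUnit (toML n σ (MvPolynomial.C b * detPoly n A ^ N)) := by
  rw [toML_apply, map_mul (MvPolynomial.map σ), map_pow (MvPolynomial.map σ), map_detPoly,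
    map_C, map_mul]
  exact IsUnit.mul ((hb.map MvPolynomial.C).map _) (isUnit_det_pow N)

end MainSpec
noncomputable section MainSpec2

open MvPolynomial

set_option maxHeartbeats 1000000 in
theorem main_spec {A B : Type*} [CommRing A] [IsDomain A] [CommRing B]
    (n : ℕ) (S₁ S₂ : Finset (MatrixLoc n (FractionRing A)))
    (h : ∀ p ∈ S₁, p ∈ Ideal.span (S₂ : Set (MatrixLoc n (FractionRing A)))) :
    ∃ b : A, b ≠ 0 ∧ ∀ σ : A →+* B, σ b ≠ 0 → IsUnit (σ b) →
      ∃ Φ : MatrixLoc n (FractionRing A) → MatrixLoc n B,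
        (∀ p ∈ (S₁ : Set (MatrixLoc n (FractionRing A))) ∪ (S₂ : Set _), SpecTo n σ p (Φ p)) ∧
        ∀ p ∈ S₁, Φ p ∈ Ideal.span (Φ '' ↑S₂) := by
  classical
  set ψ := algebraMap A (FractionRing A) with hψ
  -- relation data
  have hrel0 : ∀ p : MatrixLoc n (FractionRing A), ∃ (r : ℕ)
      (a : Fin r → MatrixLoc n (FractionRing A)) (g : Fin r → MatrixLoc n (FractionRing A)),
      (∀ i, g i ∈ S₂) ∧ (p ∈ S₁ → ∑ i, a i * g i = p) := by
    intro p
    by_cases hp : p ∈ S₁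
    · obtain ⟨r, a, g, hsum⟩ := Submodule.mem_span_set'.mp (h p hp)
      refine ⟨r, a, fun i => (g i : MatrixLoc n (FractionRing A)), fun i => (g i).2, fun _ => ?_⟩
      rw [← hsum]
      exact Finset.sum_congr rfl fun i _ => (smul_eq_mul _ _).symm
    · exact ⟨0, Fin.elim0, Fin.elim0, fun i => i.elim0, fun hp' => absurd hp' hp⟩
  choose r a g hgS hrel using hrel0
  -- the finite set of all elements needing representations
  set T : Finset (MatrixLoc n (FractionRing A)) := (S₁ ∪ S₂) ∪ S₁.biUnion
    (fun p => Finset.image (a p) Finset.univ) with hT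
  obtain ⟨b, N, hb0, hrep⟩ := exists_uniform_rep T
  choose Zmem hZmem using hrep
  set Z : MatrixLoc n (FractionRing A) → MvPolynomial (Fin n × Fin n) A :=
    fun z => if hz : z ∈ T then Zmem z hz else 0 with hZdef
  have hZ : ∀ z ∈ T, z * toML n ψ (MvPolynomial.C b * detPoly n A ^ N) = toML n ψ (Z z) := by
    intro z hz
    have : Z z = Zmem z hz := by rw [hZdef]; exact dif_pos hz
    rw [this]
    exact hZmem z hz
  have hS₁T : ∀ p ∈ S₁, p ∈ T := fun p hp =>
    Finset.mem_union_left _ (Finset.mem_union_left _ hp)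
  have hS₂T : ∀ p ∈ S₂, p ∈ T := fun p hp =>
    Finset.mem_union_left _ (Finset.mem_union_right _ hp)
  have haT : ∀ p ∈ S₁, ∀ i, a p i ∈ T := by
    intro p hp i
    apply Finset.mem_union_right
    exact Finset.mem_biUnion.mpr ⟨p, hp, Finset.mem_image.mpr ⟨i, Finset.mem_univ i, rfl⟩⟩
  refine ⟨b, hb0, ?_⟩
  intro σ hσb hσu
  obtain ⟨u, hu⟩ := isUnit_toML_denom (n := n) σ N hσu
  set Φ : MatrixLoc n (FractionRing A) → MatrixLoc n B :=
    fun z => ↑u⁻¹ * toML n σ (Z z) with hΦ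
  have hΦapp : ∀ z, Φ z = ↑u⁻¹ * toML n σ (Z z) := fun z => rfl
  have hΦspec : ∀ z, Φ z * toML n σ (MvPolynomial.C b * detPoly n A ^ N)
      = toML n σ (Z z) := by
    intro z
    rw [hΦapp, ← hu, mul_comm ((↑u⁻¹ : MatrixLoc n B)) (toML n σ (Z z)), mul_assoc,
      Units.inv_mul, mul_one]
  refine ⟨Φ, ?_, ?_⟩
  · rintro p (hp | hp)
    · exact ⟨Z p, b, N, hb0, hσb, hZ p (hS₁T p hp), hΦspec p⟩
    · exact ⟨Z p, b, N, hb0, hσb, hZ p (hS₂T p hp), hΦspec p⟩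
  · intro p hp
    -- the polynomial identity over A
    have keyA : Z p * (MvPolynomial.C b * detPoly n A ^ N)
        = ∑ i, Z (a p i) * Z (g p i) := by
      apply toML_injective ψ (IsFractionRing.injective A (FractionRing A))
      rw [map_mul, ← hZ p (hS₁T p hp), map_sum]
      calc p * toML n ψ (MvPolynomial.C b * detPoly n A ^ N)
            * toML n ψ (MvPolynomial.C b * detPoly n A ^ N)
          = (∑ i, a p i * g p i) * toML n ψ (MvPolynomial.C b * detPoly n A ^ N)
            * toML n ψ (MvPolynomial.C b * detPoly n A ^ N) := by rw [hrel p hp]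
        _ = ∑ i, toML n ψ (Z (a p i) * Z (g p i)) := by
            rw [Finset.sum_mul, Finset.sum_mul]
            apply Finset.sum_congr rfl
            intro i _
            rw [map_mul (toML n ψ) (Z (a p i)) (Z (g p i)), ← hZ (a p i) (haT p hp i),
              ← hZ (g p i) (hS₂T _ (hgS p i))]
            ring
    -- transfer along σ and conclude
    have keyB : Φ p = ∑ i, (↑u⁻¹ * toML n σ (Z (a p i))) * Φ (g p i) := by
      have h1 := congrArg (toML n σ) keyA
      rw [map_mul, map_sum] at h1
      calc Φ p = ↑u⁻¹ * toML n σ (Z p) := hΦapp p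
        _ = ↑u⁻¹ * (↑u⁻¹ * (toML n σ (Z p) * ↑u)) := by
            have hx : (↑u⁻¹ : MatrixLoc n B) * (toML n σ (Z p) * ↑u) = toML n σ (Z p) := by
              rw [mul_comm (toML n σ (Z p)) ((↑u : MatrixLoc n B)), ← mul_assoc,
                Units.inv_mul, one_mul]
            rw [hx]
        _ = ↑u⁻¹ * (↑u⁻¹ * ∑ i, toML n σ (Z (a p i) * Z (g p i))) := by rw [hu, ← h1]
        _ = ∑ i, (↑u⁻¹ * toML n σ (Z (a p i))) * Φ (g p i) := by
            rw [Finset.mul_sum, Finset.mul_sum]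
            apply Finset.sum_congr rfl
            intro i _
            rw [hΦapp, map_mul]
            ring
    rw [keyB]
    exact Ideal.sum_mem _ fun i _ =>
      Ideal.mul_mem_left _ _ (Ideal.subset_span (Set.mem_image_of_mem Φ (hgS p i)))

end MainSpec2
set_option maxHeartbeats 1000000 in
/-- (Lemma 3.1(1) of the paper), in its two versions: over
`F(x)[X,1/det(X)]` and (respectively) over `F[X,1/det(X)]`. -/
theorem ideal_membership_specialization
    {Ω : Type*} [Field Ω] [IsAlgClosed Ω] [CharZero Ω]
    (k : Type*) [Field k] [Algebra k Ω]
    (kbar : Type*) [Field kbar] [Algebra k kbar] [IsAlgClosure k kbar]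
    (D : Subalgebra k Ω) (hD : D.FG) (n : ℕ) (hn : 0 < n) :
    -- version over `F(x)[X,1/det(X)]`
    (∀ S₁ S₂ : Finset (MatrixLoc n (FractionRing (Polynomial ↥D))),
      (∀ p ∈ S₁, embMLx D n p ∈ Ideal.span (⇑(embMLx D n) '' ↑S₂)) →
      ∃ c : ↥D, c ≠ 0 ∧ ∀ φ : ↥D →ₐ[k] kbar, φ c ≠ 0 →
        ∃ Φ : MatrixLoc n (FractionRing (Polynomial ↥D))
            → MatrixLoc n (FractionRing (Polynomial kbar)),
          (∀ p ∈ (S₁ : Set _) ∪ (S₂ : Set _),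
            SpecTo n ((algebraMap (Polynomial kbar) (FractionRing (Polynomial kbar))).comp
              (Polynomial.mapRingHom φ.toRingHom)) p (Φ p)) ∧
          ∀ p ∈ S₁, Φ p ∈ Ideal.span (Φ '' ↑S₂)) ∧
    -- version over `F[X,1/det(X)]`
    (∀ S₁ S₂ : Finset (MatrixLoc n (FractionRing ↥D)),
      (∀ p ∈ S₁, embML D n p ∈ Ideal.span (⇑(embML D n) '' ↑S₂)) →
      ∃ c : ↥D, c ≠ 0 ∧ ∀ φ : ↥D →ₐ[k] kbar, φ c ≠ 0 →
        ∃ Φ : MatrixLoc n (FractionRing ↥D) → MatrixLoc n kbar,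
          (∀ p ∈ (S₁ : Set _) ∪ (S₂ : Set _), SpecTo n φ.toRingHom p (Φ p)) ∧
          ∀ p ∈ S₁, Φ p ∈ Ideal.span (Φ '' ↑S₂)) := by
  constructor
  · -- version over `F(x)`
    intro S₁ S₂ hmem
    have hEq : embMLx D n = MatrixLocMap n (embFx D) := rfl
    rw [hEq] at hmem
    obtain ⟨π, hπ0, hadd, hsmul, hone⟩ := exists_retraction (embFx D)
    have hdesc := descend' (n := n) (embFx D) π hπ0 hadd hsmul hone (↑S₂)
    have h : ∀ p ∈ S₁, p ∈ Ideal.span (S₂ : Set (MatrixLoc n (FractionRing (Polynomial ↥D)))) :=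
      fun p hp => hdesc p (hmem p hp)
    obtain ⟨b, hb0, hb⟩ := main_spec (B := FractionRing (Polynomial kbar)) n S₁ S₂ h
    refine ⟨b.leadingCoeff, Polynomial.leadingCoeff_ne_zero.mpr hb0, ?_⟩
    intro φ hφ
    have hσ : ((algebraMap (Polynomial kbar) (FractionRing (Polynomial kbar))).comp
        (Polynomial.mapRingHom φ.toRingHom)) b ≠ 0 := by
      intro h0
      rw [RingHom.comp_apply] at h0
      have hmap0 : Polynomial.mapRingHom φ.toRingHom b = 0 :=
        IsFractionRing.injective (Polynomial kbar) (FractionRing (Polynomial kbar))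
          (by rw [h0, map_zero])
      have hco := congrArg (fun q => Polynomial.coeff q b.natDegree) hmap0
      simp only [Polynomial.coe_mapRingHom, Polynomial.coeff_map, Polynomial.coeff_zero] at hco
      exact hφ hco
    have hb' := hb ((algebraMap (Polynomial kbar) (FractionRing (Polynomial kbar))).comp
      (Polynomial.mapRingHom φ.toRingHom)) hσ
    exact hb' (isUnit_iff_ne_zero.mpr hσ)
  · -- version over `F`
    intro S₁ S₂ hmem
    have hEq : embML D n = MatrixLocMap n (embF D) := rfl
    rw [hEq] at hmem
    obtain ⟨π, hπ0, hadd, hsmul, hone⟩ := exists_retraction (embF D)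
    have hdesc := descend' (n := n) (embF D) π hπ0 hadd hsmul hone (↑S₂)
    have h : ∀ p ∈ S₁, p ∈ Ideal.span (S₂ : Set (MatrixLoc n (FractionRing ↥D))) :=
      fun p hp => hdesc p (hmem p hp)
    obtain ⟨b, hb0, hb⟩ := main_spec (B := kbar) n S₁ S₂ h
    exact ⟨b, hb0, fun φ hφ => hb φ.toRingHom hφ (isUnit_iff_ne_zero.mpr hφ)⟩
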